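/- An affine permutation ω is m-stable if and only if, for every i ∈ {1,...,n}, the set M_ω^i = {x ∈ ℤ : ω(x) ≥ i} is (m,n)-invariant, i.e., closed under addition of both m and n. -/

import Mathlib

/-- An affine permutation `ω` is `m`-stable iff for every
`i ∈ {1,…,n}` the set `M_ω^i = {x : ω(x) ≥ i}` is `(m,n)`-invariant, i.e. closed
under adding `m` and adding `n`. -/
theorem stmt_5 (m n : ℕ) (hm : 0 < m) (hn : 0 < n)
    (ω : ℤ → ℤ) (hbij : Function.Bijective ω)
    (hper : ∀ i : ℤ, ω (i + n) = ω i + n) :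
    (∀ x : ℤ, ω x < ω (x + m)) ↔
      ∀ i : ℤ, 1 ≤ i → i ≤ n →
        ∀ x : ℤ, i ≤ ω x → i ≤ ω (x + m) ∧ i ≤ ω (x + n) := by
  constructor
  · intro hst i h1 hin x hx
    refine ⟨le_of_lt (lt_of_le_of_lt hx (hst x)), ?_⟩
    rw [hper]
    omega
  · intro h x
    have hz : ∀ k : ℤ, ∀ y : ℤ, ω (y + k * n) = ω y + k * n := by
      intro k
      induction k using Int.induction_on with
      | zero => simp
      | succ k ih =>
        intro y
        have h1 := hper (y + k * n)
        have h2 := ih y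
        have he : y + (k + 1 : ℤ) * n = y + k * n + n := by ring
        rw [he, h1, h2]; ring
      | pred k ih =>
        intro y
        have h1 := hper (y + (-k - 1) * n)
        have h2 := ih y
        have he : y + (-k - 1 : ℤ) * n + n = y + (-k : ℤ) * n := by ring
        rw [he, h2] at h1
        omega
    by_contra hlt
    push_neg at hlt
    have hne : ω (x + m) ≠ ω x := by
      intro he
      have := hbij.1 he
      omega
    have hlt' : ω (x + m) < ω x := lt_of_le_of_ne hlt hne
    set i : ℤ := ω (x + m) + 1 with hi
    obtain ⟨k, r, hr0, hrn, hkr⟩ : ∃ k r : ℤ, 0 ≤ r ∧ r < n ∧ i - 1 = k * n + r := by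
      refine ⟨(i - 1) / (n : ℤ), (i - 1) % (n : ℤ), ?_, ?_, ?_⟩
      · exact Int.emod_nonneg _ (by exact_mod_cast hn.ne')
      · exact Int.emod_lt_of_pos _ (by exact_mod_cast hn)
      · rw [mul_comm]
        exact (Int.mul_ediv_add_emod (i - 1) (n : ℤ)).symm
    have hneg : (-k : ℤ) * n = -(k * n) := by ring
    have hb1 : 1 ≤ i - k * n := by omega
    have hb2 : i - k * n ≤ n := by omega
    have hωx : ω (x + (-k) * n) = ω x + (-k) * n := hz (-k) x
    have hx' : i - k * n ≤ ω (x + (-k) * n) := by rw [hωx]; omega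
    obtain ⟨hA, _⟩ := h (i - k * n) hb1 hb2 (x + (-k) * n) hx'
    have hωxm : ω (x + (-k) * n + m) = ω (x + m) + (-k) * n := by
      have h3 := hz (-k) (x + m)
      have he : x + (-k : ℤ) * n + m = x + m + (-k : ℤ) * n := by ring
      rw [he, h3]
    rw [hωxm] at hA
    omega
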